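/- Let n ≥ 2 and let f(x) = x^n + a_{n−1}x^{n−1} + a_{n−2}x^{n−2} + ⋯ + a_1 x + a_0 ∈ ℤ[x]. If |a_0| is a prime number and |a_0| > 1 + |a_{n−1}| + |a_{n−2}| + ⋯ + |a_1|, then f is irreducible over ℚ. -/

import Mathlib

open Polynomial

/-- Every complex root of `f` has absolute value greater than 1. -/
lemma stmt_15_root_bound (n : ℕ) (hn : 2 ≤ n) (f : Polynomial ℤ) (hmonic : f.Monic)
    (hdeg : f.natDegree = n)
    (hdom : 1 + ∑ i ∈ Finset.Ico 1 n, |f.coeff i| < |f.coeff 0|)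
    (z : ℂ) (hz : aeval z f = 0) : 1 < ‖z‖ := by
  by_contra h
  push_neg at h
  have habs : ∀ i, ‖z‖ ^ i ≤ 1 := fun i =>
    pow_le_one₀ (norm_nonneg z) h
  have he : (0 : ℂ) = ∑ i ∈ Finset.range (n + 1), (f.coeff i : ℂ) * z ^ i := by
    rw [← hz, Polynomial.aeval_eq_sum_range]
    rw [hdeg]
    simp [zsmul_eq_mul]
  rw [Finset.sum_range_succ] at he
  have hcn : f.coeff n = 1 := by
    have := hmonic.coeff_natDegree
    rwa [hdeg] at this
  rw [hcn] at he
  rw [Finset.range_eq_Ico, Finset.sum_eq_sum_Ico_succ_bot (by omega : 0 < n)] at he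
  simp only [pow_zero, mul_one, Int.cast_one, one_mul] at he
  have hc0 : (f.coeff 0 : ℂ) = -(∑ i ∈ Finset.Ico (0 + 1) n, (f.coeff i : ℂ) * z ^ i + z ^ n) := by
    linear_combination -he
  have hb : ‖((f.coeff 0 : ℂ))‖ ≤
      (∑ i ∈ Finset.Ico 1 n, (|f.coeff i| : ℝ)) + 1 := by
    rw [hc0, norm_neg]
    refine le_trans (norm_add_le _ _) (add_le_add ?_ ?_)
    · refine le_trans (norm_sum_le _ _) (Finset.sum_le_sum fun i _ => ?_)
      rw [norm_mul, norm_pow]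
      have h1 := mul_le_mul_of_nonneg_left (habs i) (norm_nonneg ((f.coeff i : ℂ)))
      rw [mul_one] at h1
      refine le_trans h1 (le_of_eq ?_)
      rw [Complex.norm_intCast]
    · rw [norm_pow]; exact habs n
  have hcast : ‖((f.coeff 0 : ℂ))‖ = (|f.coeff 0| : ℝ) := by
    rw [Complex.norm_intCast]
  rw [hcast] at hb
  have hdom' : (1 : ℝ) + ∑ i ∈ Finset.Ico 1 n, (|f.coeff i| : ℝ) < (|f.coeff 0| : ℝ) := by
    exact_mod_cast hdom
  linarith

/-- If every complex root of `f` has absolute value `> 1`, `g` divides `f`,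
`g` has unit leading coefficient, and `|g(0)| = 1`, then `g` is a unit. -/
lemma stmt_15_aux (f g : Polynomial ℤ)
    (hroots : ∀ z : ℂ, aeval z f = 0 → 1 < ‖z‖)
    (hg : g ∣ f) (hlead : IsUnit g.leadingCoeff) (h0 : (g.coeff 0).natAbs = 1) :
    IsUnit g := by
  by_cases hdg : g.natDegree = 0
  · rw [Polynomial.eq_C_of_natDegree_eq_zero hdg]
    rw [Polynomial.isUnit_C]
    have : g.leadingCoeff = g.coeff 0 := by
      rw [Polynomial.leadingCoeff, hdg]
    rwa [this] at hlead
  · exfalso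
    set G : Polynomial ℂ := g.map (algebraMap ℤ ℂ) with hG
    have hinj : Function.Injective (algebraMap ℤ ℂ) := by
      intro a b hab
      have : (a : ℂ) = (b : ℂ) := by simpa using hab
      exact_mod_cast this
    have hGdeg : G.natDegree = g.natDegree :=
      Polynomial.natDegree_map_eq_of_injective hinj g
    have hGne : G ≠ 0 := by
      intro hc
      rw [hc] at hGdeg
      simp at hGdeg
      exact hdg hGdeg.symm
    have hsplits : Splits G := IsAlgClosed.splits G
    have hcard : G.roots.card = G.natDegree :=
      (Polynomial.splits_iff_card_roots).mp hsplits
    have hroots_ne : G.roots ≠ 0 := by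
      intro hc
      rw [hc] at hcard
      simp at hcard
      rw [hGdeg] at hcard
      exact hdg hcard.symm
    -- every root of G has absolute value > 1
    have hGroot : ∀ z ∈ G.roots, 1 < ‖z‖ := by
      intro z hzr
      have hz : aeval z g = 0 := by
        have h1 := Polynomial.isRoot_of_mem_roots hzr
        rw [Polynomial.IsRoot, hG, Polynomial.eval_map] at h1
        rwa [aeval_def]
      apply hroots z
      obtain ⟨c, hc⟩ := hg
      rw [hc, map_mul, hz, zero_mul]
    -- expression for G
    have hfac := hsplits.eq_prod_roots
    have heval : G.eval 0 = G.leadingCoeff * (G.roots.map (fun r => -r)).prod := by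
      conv_lhs => rw [hfac]
      rw [Polynomial.eval_mul, Polynomial.eval_C, Polynomial.eval_multiset_prod]
      congr 1
      rw [Multiset.map_map]
      have hmc : Multiset.map (eval 0 ∘ fun a => X - C a) G.roots =
          Multiset.map (fun r => -r) G.roots :=
        Multiset.map_congr rfl (fun x _ => by simp)
      rw [hmc]
    have hGeval0 : G.eval 0 = (g.coeff 0 : ℂ) := by
      rw [hG, Polynomial.eval_map, Polynomial.eval₂_at_zero, eq_intCast]
    have habs0 : ‖G.eval 0‖ = 1 := by
      have habs1 : |g.coeff 0| = 1 := by rw [Int.abs_eq_natAbs, h0]; rfl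
      rw [hGeval0, Complex.norm_intCast, ← Int.cast_abs, habs1]
      norm_num
    have hablead : ‖G.leadingCoeff‖ = 1 := by
      have hl : G.leadingCoeff = (g.leadingCoeff : ℂ) := by
        rw [hG, Polynomial.leadingCoeff, hGdeg, Polynomial.coeff_map, eq_intCast,
          Polynomial.leadingCoeff]
      rw [hl, Complex.norm_intCast]
      rcases Int.isUnit_iff.mp hlead with h1 | h1 <;> rw [h1] <;> norm_num
    -- product of |roots| > 1
    obtain ⟨r, hr⟩ := Multiset.exists_mem_of_ne_zero hroots_ne
    obtain ⟨rest, hrest⟩ := Multiset.exists_cons_of_mem hr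
    have hprod : 1 < ‖(G.roots.map (fun r => -r)).prod‖ := by
      rw [show ‖(G.roots.map (fun r => -r)).prod‖ = ((G.roots.map (fun r => -r)).map norm).prod from
        map_multiset_prod (normHom (α := ℂ)) _, hrest]
      simp only [Multiset.map_cons, Multiset.map_map, Multiset.prod_cons]
      have h1 : 1 < ‖-r‖ := by
        rw [norm_neg]; exact hGroot r hr
      have h2 : 1 ≤ ((rest.map (norm ∘ fun r : ℂ => -r))).prod := by
        apply Multiset.one_le_prod
        intro x hx
        obtain ⟨y, hy, rfl⟩ := Multiset.mem_map.mp hx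
        simp only [Function.comp_apply, norm_neg]
        have hy' : y ∈ G.roots := by rw [hrest]; exact Multiset.mem_cons_of_mem hy
        exact le_of_lt (hGroot y hy')
      exact lt_of_lt_of_le h1 (le_mul_of_one_le_right (norm_nonneg _) h2)
    have hfin : ‖G.eval 0‖ =
        ‖G.leadingCoeff‖ * ‖(G.roots.map (fun r => -r)).prod‖ := by
      rw [heval, norm_mul]
    rw [habs0, hablead, one_mul] at hfin
    linarith

theorem stmt_15 (n : ℕ) (hn : 2 ≤ n) (f : Polynomial ℤ) (hmonic : f.Monic)
    (hdeg : f.natDegree = n) (hprime : (f.coeff 0).natAbs.Prime)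
    (hdom : 1 + ∑ i ∈ Finset.Ico 1 n, |f.coeff i| < |f.coeff 0|) :
    Irreducible (f.map (algebraMap ℤ ℚ)) := by
  rw [← hmonic.irreducible_iff_irreducible_map_fraction_map]
  have hroots := stmt_15_root_bound n hn f hmonic hdeg hdom
  constructor
  · intro hu
    have := Polynomial.natDegree_eq_zero_of_isUnit hu
    omega
  · intro g h hfgh
    have hlead : g.leadingCoeff * h.leadingCoeff = 1 := by
      have := hmonic.leadingCoeff
      rw [hfgh, Polynomial.leadingCoeff_mul] at this
      exact this
    have hug : IsUnit g.leadingCoeff := IsUnit.of_mul_eq_one _ hlead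
    have huh : IsUnit h.leadingCoeff := IsUnit.of_mul_eq_one _ (by rwa [mul_comm] at hlead)
    have h0 : f.coeff 0 = g.coeff 0 * h.coeff 0 := by
      rw [hfgh, Polynomial.mul_coeff_zero]
    have hna : (f.coeff 0).natAbs = (g.coeff 0).natAbs * (h.coeff 0).natAbs := by
      rw [h0, Int.natAbs_mul]
    have := ((Nat.prime_iff.mp hprime).irreducible).isUnit_or_isUnit hna
    rcases this with hu | hu
    · left
      exact stmt_15_aux f g hroots ⟨h, hfgh⟩ hug (Nat.isUnit_iff.mp hu)
    · right
      exact stmt_15_aux f h hroots ⟨g, by rw [hfgh, mul_comm]⟩ huh (Nat.isUnit_iff.mp hu)
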